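/- Let M be a nonzero comultiplication R-module with exactly two minimal submodules S₁ and S₂. Then the large sum graph Ǵ(M) is the disjoint union of two complete subgraphs G₁ and G₂, where Gⱼ consists of the non-large submodules containing Sⱼ, and no vertex of G₁ is adjacent to a vertex of G₂. -/

import Mathlib

/-- `M` is a comultiplication `R`-module: every submodule is of the form `(0 :_M I)`. -/
def IsComultiplication (R M : Type*) [CommRing R] [AddCommGroup M] [Module R M] : Prop :=
  ∀ N : Submodule R M, ∃ I : Ideal R, ∀ m : M, m ∈ N ↔ ∀ r ∈ I, r • m = 0

/-- A submodule is large (essential) if it meets every nonzero submodule nontrivially. -/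
def IsLarge {R M : Type*} [CommRing R] [AddCommGroup M] [Module R M]
    (N : Submodule R M) : Prop :=
  ∀ L : Submodule R M, L ≠ ⊥ → N ⊓ L ≠ ⊥

/-- The vertices of the large sum graph: nonzero non-large submodules. -/
abbrev LargeSumVtx (R M : Type*) [CommRing R] [AddCommGroup M] [Module R M] :=
  {N : Submodule R M // N ≠ ⊥ ∧ ¬ IsLarge N}

/-- The large sum graph: distinct nonzero non-large submodules `N, K` are adjacent
iff `N + K` is not large. -/
def largeSumGraph (R M : Type*) [CommRing R] [AddCommGroup M] [Module R M] :
    SimpleGraph (LargeSumVtx R M) where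
  Adj N K := N ≠ K ∧ ¬ IsLarge (N.1 ⊔ K.1)
  symm := ⟨fun a b ⟨h1, h2⟩ => ⟨h1.symm, by rwa [sup_comm]⟩⟩
  loopless := ⟨fun a h => h.1 rfl⟩

section Aux
variable {R M : Type*} [CommRing R] [AddCommGroup M] [Module R M]

open Submodule

lemma comult_mem (hc : IsComultiplication R M) {N : Submodule R M} {m : M}
    (h : ∀ r : R, (∀ n ∈ N, r • n = 0) → r • m = 0) : m ∈ N := by
  obtain ⟨I, hI⟩ := hc N
  rw [hI]
  exact fun r hr => h r (fun n hn => (hI n).mp hn r hr)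

lemma comult_not_mem (hc : IsComultiplication R M) {N : Submodule R M} {m : M}
    (h : m ∉ N) : ∃ c : R, (∀ n ∈ N, c • n = 0) ∧ c • m ≠ 0 := by
  by_contra hco
  push_neg at hco
  exact h (comult_mem hc hco)

lemma atom_le_of_inf_ne_bot {A N : Submodule R M} (hA : IsAtom A) (h : A ⊓ N ≠ ⊥) : A ≤ N := by
  rcases eq_or_lt_of_le (inf_le_left : A ⊓ N ≤ A) with heq | hlt
  · exact heq ▸ inf_le_right
  · exact absurd (hA.2 _ hlt) h

lemma exists_atom_le (hc : IsComultiplication R M) {N : Submodule R M} (hN : N ≠ ⊥) :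
    ∃ A : Submodule R M, IsAtom A ∧ A ≤ N := by
  obtain ⟨m, hmN, hm0⟩ := Submodule.ne_bot_iff N |>.mp hN
  have hI0 : (LinearMap.ker (LinearMap.toSpanSingleton R M m) : Ideal R) ≠ ⊤ := by
    intro h
    have : (1 : R) ∈ LinearMap.ker (LinearMap.toSpanSingleton R M m) := h ▸ trivial
    simp [LinearMap.mem_ker] at this
    exact hm0 this
  obtain ⟨𝔪, h𝔪max, h𝔪⟩ := Ideal.exists_le_maximal _ hI0
  have hmP : m ∉ 𝔪 • (span R {m} : Submodule R M) := by
    intro h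
    obtain ⟨a, ha𝔪, ham⟩ := Submodule.mem_smul_span_singleton.mp h
    have : (1 - a) • m = 0 := by rw [sub_smul, one_smul, ham, sub_self]
    have h1 : (1 - a) ∈ 𝔪 := h𝔪 (by simpa [LinearMap.mem_ker])
    exact h𝔪max.ne_top (Ideal.eq_top_iff_one _ |>.mpr (by simpa using add_mem h1 ha𝔪))
  obtain ⟨c, hcP, hcm⟩ := comult_not_mem hc hmP
  set k := c • m with hk
  have hk𝔪 : ∀ r ∈ 𝔪, r • k = 0 := by
    intro r hr
    have hrm : r • m ∈ 𝔪 • (span R {m} : Submodule R M) :=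
      Submodule.smul_mem_smul hr (mem_span_singleton_self m)
    calc r • (c • m) = c • (r • m) := smul_comm r c m
    _ = 0 := hcP _ hrm
  refine ⟨span R {k}, ⟨fun h => hcm (span_singleton_eq_bot.mp h), ?_⟩, ?_⟩
  · intro L hL
    rw [eq_bot_iff]
    intro l hlL
    by_contra hl0
    obtain ⟨r, rfl⟩ := mem_span_singleton.mp (hL.le hlL)
    have hr𝔪 : r ∉ 𝔪 := fun h => hl0 (by simpa using hk𝔪 r h)
    obtain ⟨y, i, hi𝔪, hyi⟩ := h𝔪max.exists_inv hr𝔪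
    have hkL : k ∈ L := by
      have : (y * r + i) • k = k := by rw [hyi, one_smul]
      rw [← this, add_smul, mul_smul]
      exact add_mem (L.smul_mem y hlL) (by rw [hk𝔪 i hi𝔪]; exact L.zero_mem)
    exact hL.2 ((span_singleton_le_iff_mem _ _).mpr hkL) 
  · exact (span_singleton_le_iff_mem _ _).mpr (N.smul_mem c hmN)

lemma atom_le_sup (hc : IsComultiplication R M) {S N K : Submodule R M}
    (hS : IsAtom S) (h : S ≤ N ⊔ K) : S ≤ N ∨ S ≤ K := by
  by_contra hcon
  push_neg at hcon
  obtain ⟨hN, hK⟩ := hcon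
  obtain ⟨s, hsS, hs0⟩ := Submodule.ne_bot_iff S |>.mp hS.1
  have hspan : ∀ x ∈ S, x ≠ (0:M) → span R {x} = S := by
    intro x hx hx0
    rcases eq_or_lt_of_le ((span_singleton_le_iff_mem _ _).mpr hx) with heq | hlt
    · exact heq
    · exact absurd (hS.2 _ hlt) (fun h => hx0 (span_singleton_eq_bot.mp h))
  have hsN : s ∉ N := fun hmem =>
    hN ((hspan s hsS hs0) ▸ (span_singleton_le_iff_mem _ _).mpr hmem)
  have hsK : s ∉ K := fun hmem =>
    hK ((hspan s hsS hs0) ▸ (span_singleton_le_iff_mem _ _).mpr hmem)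
  obtain ⟨a, haN, has⟩ := comult_not_mem hc hsN
  obtain ⟨b, hbK, hbs⟩ := comult_not_mem hc hsK
  obtain ⟨x, hxN, y, hyK, hxy⟩ := Submodule.mem_sup.mp (h hsS)
  have hab : (a * b) • s = 0 := by
    rw [← hxy, smul_add]
    have h1 : (a * b) • x = 0 := by rw [mul_comm, mul_smul, haN x hxN, smul_zero]
    have h2 : (a * b) • y = 0 := by rw [mul_smul, hbK y hyK, smul_zero]
    rw [h1, h2, add_zero]
  have has' : a • s ∈ S := S.smul_mem a hsS
  obtain ⟨t, hts⟩ := mem_span_singleton.mp ((hspan _ has' has) ▸ hsS : s ∈ span R {a • s})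
  apply hbs
  calc b • s = b • (t • a • s) := by rw [hts]
  _ = (b * t) • (a • s) := by rw [mul_smul]
  _ = t • ((a * b) • s) := by rw [mul_smul b t, mul_comm a b, mul_smul, smul_comm b t]
  _ = 0 := by rw [hab, smul_zero]

end Aux

/-- If a nonzero comultiplication module has exactly two minimal submodules `S₁, S₂`, then the
large sum graph is the disjoint union of the two complete subgraphs on the vertices containing
`S₁` resp. `S₂`, with no edges between them. -/


theorem stmt7 {R M : Type*} [CommRing R] [AddCommGroup M] [Module R M]
    [Nontrivial M] (hc : IsComultiplication R M)
    (S₁ S₂ : Submodule R M) (hne : S₁ ≠ S₂)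
    (hmin : {S : Submodule R M | IsAtom S} = {S₁, S₂}) :
    (∀ v : LargeSumVtx R M, S₁ ≤ v.1 ∨ S₂ ≤ v.1) ∧
    (∀ v : LargeSumVtx R M, ¬ (S₁ ≤ v.1 ∧ S₂ ≤ v.1)) ∧
    (∀ u v : LargeSumVtx R M, S₁ ≤ u.1 → S₁ ≤ v.1 → u ≠ v → (largeSumGraph R M).Adj u v) ∧
    (∀ u v : LargeSumVtx R M, S₂ ≤ u.1 → S₂ ≤ v.1 → u ≠ v → (largeSumGraph R M).Adj u v) ∧
    (∀ u v : LargeSumVtx R M, S₁ ≤ u.1 → S₂ ≤ v.1 → ¬ (largeSumGraph R M).Adj u v) := by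
  have hS₁ : IsAtom S₁ := by
    have : S₁ ∈ {S : Submodule R M | IsAtom S} := by rw [hmin]; left; rfl
    exact this
  have hS₂ : IsAtom S₂ := by
    have : S₂ ∈ {S : Submodule R M | IsAtom S} := by rw [hmin]; right; rfl
    exact this
  have hatom : ∀ {N : Submodule R M}, IsAtom N → N = S₁ ∨ N = S₂ := by
    intro N hN
    have : N ∈ ({S₁, S₂} : Set (Submodule R M)) := hmin ▸ hN
    simpa using this
  have hlarge : ∀ {N : Submodule R M}, S₁ ≤ N → S₂ ≤ N → IsLarge N := by
    intro N h1 h2 L hL hbot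
    obtain ⟨A, hA, hAL⟩ := exists_atom_le hc hL
    have hAN : A ≤ N := by rcases hatom hA with rfl | rfl; exacts [h1, h2]
    exact hA.1 (le_bot_iff.mp (hbot ▸ le_inf hAN hAL))
  have hof : ∀ {N : Submodule R M}, IsLarge N → ∀ {S : Submodule R M}, IsAtom S → S ≤ N := by
    intro N hN S hS
    exact atom_le_of_inf_ne_bot hS (by rw [inf_comm]; exact hN S hS.1)
  refine ⟨?_, ?_, ?_, ?_, ?_⟩
  · intro v
    obtain ⟨A, hA, hAv⟩ := exists_atom_le hc v.2.1
    rcases hatom hA with rfl | rfl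
    · exact Or.inl hAv
    · exact Or.inr hAv
  · rintro v ⟨h1, h2⟩
    exact v.2.2 (hlarge h1 h2)
  · intro u v hu hv huv
    refine ⟨huv, fun hL => ?_⟩
    rcases atom_le_sup hc hS₂ (hof hL hS₂) with h | h
    · exact u.2.2 (hlarge hu h)
    · exact v.2.2 (hlarge hv h)
  · intro u v hu hv huv
    refine ⟨huv, fun hL => ?_⟩
    rcases atom_le_sup hc hS₁ (hof hL hS₁) with h | h
    · exact u.2.2 (hlarge h hu)
    · exact v.2.2 (hlarge h hv)
  · rintro u v hu hv ⟨-, hnl⟩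
    exact hnl (hlarge (le_trans hu le_sup_left) (le_trans hv le_sup_right))
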